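/- For a finite MDP, policy π, action a, and state s, let Δ(γ) = Q^π_γ(s,a) − V^π_γ(s) be expressed as A(γ)/B(γ) with A(γ)=(1−γ)^{c₁}A₁(γ), B(γ)=(1−γ)^{c₂}B₁(γ), A₁(1)≠0, B₁(1)≠0. Then A₁(1)/B₁(1) = ψ^{a,π}_{j₀}(s), where j₀ = min{ j : ψ^{a,π}_j(s) ≠ 0 } and ψ^{a,π}_j are the Laurent coefficient vectors of q^π_a − v^π at γ = 1. Consequently the μ-ordering sign of Δ agrees with the sign of the first nonzero Laurent coefficient used by the Miller–Veinott policy improvement step. -/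

import Mathlib

open Matrix Polynomial Filter Topology

section
set_option maxHeartbeats 1600000


set_option maxHeartbeats 1000000 in

private lemma aux_limit {g : ℕ → ℝ} {c : ℝ} (hc : 0 < c)
    (hs : Summable (fun k => g k * c ^ k))
    {F r : ℝ → ℝ} {l : Filter ℝ}
    (hr0 : ∀ᶠ γ in l, 0 < r γ ∧ r γ ≤ c)
    (hr : Tendsto r l (𝓝 0))
    (hF : ∀ᶠ γ in l, HasSum (fun k => g k * r γ ^ k) (F γ)) :
    Tendsto F l (𝓝 (g 0)) := by
  have hs1 : Summable (fun k => g (k + 1) * c ^ (k + 1)) :=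
    (summable_nat_add_iff 1).mpr hs
  have hs1a : Summable (fun k => |g (k + 1)| * c ^ (k + 1)) := by
    have := summable_abs_iff.mpr hs1
    refine this.congr fun k => ?_
    rw [abs_mul, abs_of_pos (pow_pos hc _)]
  set C := ∑' k, |g (k + 1)| * c ^ (k + 1) with hC
  have hCnn : 0 ≤ C := tsum_nonneg fun k => by positivity
  have key : ∀ᶠ γ in l, |F γ - g 0| ≤ (r γ / c) * C := by
    filter_upwards [hr0, hF] with γ ⟨hrpos, hrle⟩ hFs
    have h1 : HasSum (fun k => g (k + 1) * r γ ^ (k + 1))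
        (F γ - ∑ i ∈ Finset.range 1, g i * r γ ^ i) :=
      (hasSum_nat_add_iff' (f := fun k => g k * r γ ^ k) 1).mpr hFs
    simp only [Finset.range_one, Finset.sum_singleton, pow_zero, mul_one] at h1
    have hmaj : ∀ k, |g (k + 1) * r γ ^ (k + 1)| ≤ (r γ / c) * (|g (k + 1)| * c ^ (k + 1)) := by
      intro k
      rw [abs_mul, abs_of_pos (pow_pos hrpos _)]
      have h2 : r γ ^ (k + 1) ≤ (r γ / c) * c ^ (k + 1) := by
        have : (r γ / c) ^ (k + 1) ≤ r γ / c :=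
          pow_le_of_le_one (by positivity) (div_le_one_of_le₀ hrle hc.le) (Nat.succ_ne_zero k)
        calc r γ ^ (k + 1) = (r γ / c) ^ (k + 1) * c ^ (k + 1) := by
              rw [div_pow]; field_simp
          _ ≤ (r γ / c) * c ^ (k + 1) := by
              exact mul_le_mul_of_nonneg_right this (by positivity)
      calc |g (k+1)| * r γ ^ (k+1) ≤ |g (k+1)| * ((r γ / c) * c ^ (k+1)) :=
            mul_le_mul_of_nonneg_left h2 (abs_nonneg _)
        _ = (r γ / c) * (|g (k+1)| * c ^ (k+1)) := by ring
    have hsum2 : Summable (fun k => |g (k + 1) * r γ ^ (k + 1)|) :=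
      summable_abs_iff.mpr h1.summable
    calc |F γ - g 0| = ‖∑' k, g (k + 1) * r γ ^ (k + 1)‖ := by
          rw [h1.tsum_eq]; rfl
      _ ≤ ∑' k, ‖g (k + 1) * r γ ^ (k + 1)‖ := norm_tsum_le_tsum_norm (by exact hsum2)
      _ ≤ ∑' k, (r γ / c) * (|g (k + 1)| * c ^ (k + 1)) :=
          Summable.tsum_le_tsum hmaj (by exact hsum2) (hs1a.mul_left _)
      _ = (r γ / c) * C := tsum_mul_left
  have hb : Tendsto (fun γ => (r γ / c) * C) l (𝓝 0) := by
    have : Tendsto (fun γ => r γ / c) l (𝓝 (0 / c)) := hr.div_const c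
    simpa using this.mul_const C
  have habs : Tendsto (fun γ => |F γ - g 0|) l (𝓝 0) :=
    squeeze_zero' (Eventually.of_forall fun γ => abs_nonneg _) key hb
  rw [tendsto_iff_dist_tendsto_zero]
  simpa [Real.dist_eq] using habs


section
set_option maxHeartbeats 1000000

private lemma aux_key
    (n : ℕ) (T : Fin n → Fin n → ℝ) (ra : Fin n → ℝ) (V : ℝ → Fin n → ℝ) (s : Fin n)
    (y ψ : ℕ → Fin n → ℝ)
    (hψ0 : ψ 0 = (fun t => ∑ t', T t t' * y 0 t') - y 0)
    (hψ1 : ψ 1 = ra + ((fun t => ∑ t', T t t' * y 1 t') - y 1) - y 0)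
    (hψ : ∀ j, 2 ≤ j → ψ j = ((fun t => ∑ t', T t t' * y j t') - y j) - y (j - 1))
    (γ : ℝ) (hγ0 : 0 < γ) (hγ1 : γ < 1)
    (hV : HasSum (fun j : ℕ => ((1 + (1 - γ) / γ) * ((1 - γ) / γ) ^ ((j : ℤ) - 1)) • y j)
        (V γ)) :
    HasSum (fun j : ℕ => ((1 - γ) / γ) ^ ((j : ℤ) - 1) * ψ j s)
      ((ra s + γ * ∑ s', T s s' * V γ s') - V γ s) := by
  set ρ : ℝ := (1 - γ) / γ with hρdef
  have hγne : γ ≠ 0 := hγ0.ne'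
  have hρpos : 0 < ρ := div_pos (by linarith) hγ0
  have hγρ : γ * (1 + ρ) = 1 := by rw [hρdef]; field_simp; ring
  have hVt : ∀ t, HasSum (fun j : ℕ => (1 + ρ) * ρ ^ ((j : ℤ) - 1) * y j t) (V γ t) := by
    intro t
    have h := Pi.hasSum.mp hV t
    exact h.congr_fun fun j => by simp [Pi.smul_apply, smul_eq_mul]
  -- h1 : Σ ρ^{j-1} y_j(s) = γ V(s)
  have h1 : HasSum (fun j : ℕ => ρ ^ ((j : ℤ) - 1) * y j s) (γ * V γ s) := by
    have h := (hVt s).mul_left γ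
    have he : (fun j : ℕ => γ * ((1 + ρ) * ρ ^ ((j : ℤ) - 1) * y j s))
        = fun j : ℕ => ρ ^ ((j : ℤ) - 1) * y j s := by
      funext j
      rw [show γ * ((1 + ρ) * ρ ^ ((j : ℤ) - 1) * y j s)
          = (γ * (1 + ρ)) * (ρ ^ ((j : ℤ) - 1) * y j s) by ring, hγρ, one_mul]
    rwa [he] at h
  -- h2 : Σ ρ^{j-1} (P y_j)(s) = γ (P V)(s)
  have h2 : HasSum (fun j : ℕ => ρ ^ ((j : ℤ) - 1) * ∑ t', T s t' * y j t')
      (γ * ∑ t', T s t' * V γ t') := by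
    have hterm : ∀ t' ∈ Finset.univ, HasSum
        (fun j : ℕ => γ * T s t' * ((1 + ρ) * ρ ^ ((j : ℤ) - 1) * y j t'))
        (γ * T s t' * V γ t') := fun t' _ => (hVt t').mul_left _
    have h := hasSum_sum hterm
    have he : (fun j : ℕ => ∑ t' ∈ Finset.univ, γ * T s t' * ((1 + ρ) * ρ ^ ((j : ℤ) - 1) * y j t'))
        = fun j : ℕ => ρ ^ ((j : ℤ) - 1) * ∑ t', T s t' * y j t' := by
      funext j
      rw [Finset.mul_sum]
      refine Finset.sum_congr rfl fun t' _ => ?_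
      rw [show γ * T s t' * ((1 + ρ) * ρ ^ ((j : ℤ) - 1) * y j t')
          = (γ * (1 + ρ)) * (ρ ^ ((j : ℤ) - 1) * (T s t' * y j t')) by ring, hγρ, one_mul]
    have hv : ∑ t' ∈ Finset.univ, γ * T s t' * V γ t' = γ * ∑ t', T s t' * V γ t' := by
      rw [Finset.mul_sum]
      exact Finset.sum_congr rfl fun t' _ => by ring
    rwa [he, hv] at h
  -- h3 : Σ ρ^{j} y_j(s) = (1-γ) V(s)
  have h3 : HasSum (fun j : ℕ => ρ ^ (j : ℤ) * y j s) ((1 - γ) * V γ s) := by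
    have h := h1.mul_left ρ
    have he : (fun j : ℕ => ρ * (ρ ^ ((j : ℤ) - 1) * y j s))
        = fun j : ℕ => ρ ^ (j : ℤ) * y j s := by
      funext j
      rw [← mul_assoc, show ρ * ρ ^ ((j : ℤ) - 1) = ρ ^ (1 + ((j : ℤ) - 1)) by
        rw [zpow_add₀ hρpos.ne', zpow_one]]
      norm_num
    have hv : ρ * (γ * V γ s) = (1 - γ) * V γ s := by
      have hργ : ρ * γ = 1 - γ := by rw [hρdef]; field_simp
      rw [show ρ * (γ * V γ s) = ρ * γ * V γ s by ring, hργ]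
    rwa [he, hv] at h
  -- hb : the shifted series  b j = ρ^{j-1} y_{j-1}(s)  (b 0 = 0)
  set b : ℕ → ℝ := fun j => if j = 0 then 0 else ρ ^ ((j : ℤ) - 1) * y (j - 1) s with hbdef
  have hb : HasSum b ((1 - γ) * V γ s) := by
    have he : (fun j : ℕ => b (j + 1)) = fun j : ℕ => ρ ^ (j : ℤ) * y j s := by
      funext j
      simp only [hbdef, Nat.succ_ne_zero, if_false, Nat.add_sub_cancel]
      norm_num
    refine (hasSum_nat_add_iff' (f := b) (g := (1 - γ) * V γ s) 1).mp ?_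
    rw [he]
    simpa [hbdef] using h3
  -- combine everything
  have he2 : HasSum (fun j : ℕ => if j = 1 then ra s else 0) (ra s) := hasSum_ite_eq 1 (ra s)
  have h := ((h2.sub h1).sub hb).add he2
  have hfun : (fun j : ℕ => (ρ ^ ((j : ℤ) - 1) * ∑ t', T s t' * y j t'
        - ρ ^ ((j : ℤ) - 1) * y j s - b j) + (if j = 1 then ra s else 0))
      = fun j : ℕ => ρ ^ ((j : ℤ) - 1) * ψ j s := by
    funext j
    match j with
    | 0 => simp [hbdef, hψ0]; ring
    | 1 => simp [hbdef, hψ1]; ring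
    | (j+2) =>
      have hj := hψ (j+2) (by omega)
      simp only [hbdef, hj, Pi.sub_apply, Nat.add_sub_cancel, if_neg (by omega : ¬ j+2 = 0),
        if_neg (by omega : ¬ j+2 = 1), add_zero]
      push_cast
      ring
  have hval : (γ * ∑ t', T s t' * V γ t' - γ * V γ s - (1 - γ) * V γ s) + ra s
      = (ra s + γ * ∑ s', T s s' * V γ s') - V γ s := by ring
  rwa [hfun, hval] at h

end

section
set_option maxHeartbeats 1600000


/-- **Rational-function sign equals first nonzero Laurent coefficient**
(equivalence of the μ-ordering improvement test with the Miller–Veinott test).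
Let `Δ(γ) = Q^π_γ(s,a) - V^π_γ(s) = A(γ)/B(γ)` with `A = (1-X)^{c₁} A₁`,
`B = (1-X)^{c₂} B₁`, `A₁(1) ≠ 0`, `B₁(1) ≠ 0`, and let
`ψ_j` (indexed from `-1`, i.e. `ψ j` below is `ψ_{j-1}` of the paper) be the Laurent
coefficient vectors of `q^π_a - v^π` at `γ = 1`, obtained from the expansion
`v^π_γ = (1+ρ) Σ_{j≥-1} ρ^j y_j`, `ρ = (1-γ)/γ`.  Then
`A₁(1)/B₁(1) = ψ_{j₀}(s)` where `j₀` is the first index with `ψ_{j₀}(s) ≠ 0`;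
consequently the μ-ordering sign of `Δ` agrees with the sign of the first nonzero
Laurent coefficient. -/
theorem mu_sign_eq_first_nonzero_laurent_coeff
    (n : ℕ)
    (T : Fin n → Fin n → ℝ) (ra : Fin n → ℝ)   -- transitions and rewards of action a
    (V : ℝ → Fin n → ℝ)                         -- discounted values of policy π
    (s : Fin n)
    (A B A₁ B₁ : Polynomial ℝ) (c₁ c₂ : ℕ)
    (hA_fac : A = (1 - X) ^ c₁ * A₁) (hB_fac : B = (1 - X) ^ c₂ * B₁)
    (hA₁ : A₁.eval 1 ≠ 0) (hB₁ : B₁.eval 1 ≠ 0)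
    -- Δ(γ) = Q^π_γ(s,a) - V^π_γ(s) is the rational function A/B on [0,1)
    (hrat : ∀ γ : ℝ, 0 ≤ γ → γ < 1 → B.eval γ ≠ 0 ∧
      (ra s + γ * ∑ s', T s s' * V γ s') - V γ s = A.eval γ / B.eval γ)
    (y ψ : ℕ → Fin n → ℝ)
    -- the Laurent expansion of v^π_γ holds near γ = 1
    (hLaurent : ∃ γ₀ : ℝ, 0 ≤ γ₀ ∧ γ₀ < 1 ∧ ∀ γ : ℝ, γ₀ < γ → γ < 1 →
      HasSum (fun j : ℕ => ((1 + (1 - γ) / γ) * ((1 - γ) / γ) ^ ((j : ℤ) - 1)) • y j)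
        (V γ))
    -- ψ_{-1} = (P_a - I) y_{-1}
    (hψ0 : ψ 0 = (fun t => ∑ t', T t t' * y 0 t') - y 0)
    -- ψ_0 = r_a + (P_a - I) y_0 - y_{-1}
    (hψ1 : ψ 1 = ra + ((fun t => ∑ t', T t t' * y 1 t') - y 1) - y 0)
    -- ψ_j = (P_a - I) y_j - y_{j-1} for j ≥ 1
    (hψ : ∀ j, 2 ≤ j → ψ j = ((fun t => ∑ t', T t t' * y j t') - y j) - y (j - 1))
    -- Δ is not identically zero: some Laurent coefficient at s is nonzero
    (hne : ∃ j, ψ j s ≠ 0) :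
    A₁.eval 1 / B₁.eval 1 = ψ (Nat.find hne) s ∧
    (0 < A₁.eval 1 * B₁.eval 1 ↔ 0 < ψ (Nat.find hne) s) := by
  obtain ⟨γ₀, hγ₀0, hγ₀1, hLau⟩ := hLaurent
  set J := Nat.find hne with hJdef
  have hJne : ψ J s ≠ 0 := Nat.find_spec hne
  have hJmin : ∀ i < J, ψ i s = 0 := fun i hi => not_not.mp (Nat.find_min hne hi)
  set x : ℝ := max γ₀ (1/2) with hxdef
  have hx0 : (0:ℝ) < x := lt_max_of_lt_right one_half_pos
  have hx1 : x < 1 := max_lt hγ₀1 (by norm_num)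
  set x₁ : ℝ := (x + 1) / 2 with hx₁def
  have hxx₁ : x < x₁ := by rw [hx₁def]; linarith
  have hx₁1 : x₁ < 1 := by rw [hx₁def]; linarith
  have hx₁0 : (0:ℝ) < x₁ := lt_trans hx0 hxx₁
  set Δ : ℝ → ℝ := fun γ => (ra s + γ * ∑ s', T s s' * V γ s') - V γ s with hΔ
  set r : ℝ → ℝ := fun γ => (1 - γ) / γ with hrdef
  -- key hasSum for x < γ < 1
  have key : ∀ γ, x < γ → γ < 1 → HasSum (fun k : ℕ => ψ (k + J) s * r γ ^ k)
      (r γ ^ (1 - (J:ℤ)) * Δ γ) := by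
    intro γ hγx hγ1
    have hγ0 : (0:ℝ) < γ := lt_trans hx0 hγx
    have hρpos : 0 < r γ := by
      rw [hrdef]; exact div_pos (by linarith) hγ0
    have hρne : r γ ≠ 0 := hρpos.ne'
    have hγγ₀ : γ₀ < γ := lt_of_le_of_lt (le_max_left _ _) hγx
    have hw : HasSum (fun j : ℕ => r γ ^ ((j : ℤ) - 1) * ψ j s) (Δ γ) := by
      simp only [hrdef, hΔ]
      exact aux_key n T ra V s y ψ hψ0 hψ1 hψ γ hγ0 hγ1 (hLau γ hγγ₀ hγ1)
    have hzero : ∑ i ∈ Finset.range J, r γ ^ ((i:ℤ)-1) * ψ i s = 0 :=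
      Finset.sum_eq_zero fun i hi => by
        rw [hJmin i (Finset.mem_range.mp hi), mul_zero]
    have hw2 : HasSum (fun k : ℕ => r γ ^ (((k + J : ℕ) : ℤ) - 1) * ψ (k + J) s) (Δ γ) := by
      have := (hasSum_nat_add_iff' (f := fun j : ℕ => r γ ^ ((j:ℤ)-1) * ψ j s)
        (g := Δ γ) J).mpr hw
      rwa [hzero, sub_zero] at this
    have h := hw2.mul_left (r γ ^ (1 - (J:ℤ)))
    have hfun : (fun k : ℕ => r γ ^ (1-(J:ℤ)) * (r γ ^ (((k + J : ℕ):ℤ) - 1) * ψ (k+J) s))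
        = fun k : ℕ => ψ (k + J) s * r γ ^ k := by
      funext k
      rw [← mul_assoc, ← zpow_add₀ hρne]
      push_cast
      rw [show 1 - (J:ℤ) + ((k:ℤ) + J - 1) = (k:ℤ) by ring, zpow_natCast]
      ring
    rwa [hfun] at h
  -- summability at x₁
  have hsum : Summable (fun k : ℕ => ψ (k + J) s * r x₁ ^ k) := (key x₁ hxx₁ hx₁1).summable
  have hc : 0 < r x₁ := by rw [hrdef]; exact div_pos (by linarith) hx₁0
  have hmem : (1:ℝ) ∈ Set.Ioc x₁ 1 := ⟨hx₁1, le_refl 1⟩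
  have hIoo : Set.Ioo x₁ 1 ∈ 𝓝[<] (1:ℝ) := Ioo_mem_nhdsLT_of_mem hmem
  have hr0 : ∀ᶠ γ in 𝓝[<] (1:ℝ), 0 < r γ ∧ r γ ≤ r x₁ := by
    filter_upwards [hIoo] with γ hγ
    obtain ⟨h1, h2⟩ := hγ
    have hγ0 : (0:ℝ) < γ := lt_trans hx₁0 h1
    refine ⟨by rw [hrdef]; exact div_pos (by linarith) hγ0, ?_⟩
    rw [hrdef]
    simp only
    rw [div_le_div_iff₀ hγ0 hx₁0]
    nlinarith
  have hrt : Tendsto r (𝓝[<] (1:ℝ)) (𝓝 0) := by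
    have hct : ContinuousAt r 1 := by
      rw [hrdef]
      exact ((continuous_const.sub continuous_id).continuousAt).div
        continuousAt_id one_ne_zero
    have := hct.tendsto.mono_left (nhdsWithin_le_nhds (s := Set.Iio (1:ℝ)))
    simpa [hrdef] using this
  have hFs : ∀ᶠ γ in 𝓝[<] (1:ℝ), HasSum (fun k : ℕ => ψ (k+J) s * r γ ^ k)
      (r γ ^ (1-(J:ℤ)) * Δ γ) := by
    filter_upwards [hIoo] with γ hγ
    exact key γ (lt_trans hxx₁ hγ.1) hγ.2
  have limA : Tendsto (fun γ => r γ ^ (1-(J:ℤ)) * Δ γ) (𝓝[<] (1:ℝ)) (𝓝 (ψ (0 + J) s)) :=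
    aux_limit hc hsum hr0 hrt hFs
  simp only [zero_add] at limA
  -- rational side
  set d : ℤ := (c₁ : ℤ) - c₂ + 1 - J with hd
  have heq : ∀ᶠ γ in 𝓝[<] (1:ℝ), r γ ^ (1-(J:ℤ)) * Δ γ
      = (1 - γ) ^ d * (γ ^ ((J:ℤ) - 1) * (A₁.eval γ / B₁.eval γ)) := by
    filter_upwards [hIoo] with γ hγ
    obtain ⟨h1, h2⟩ := hγ
    have hγ0 : (0:ℝ) < γ := lt_trans hx₁0 h1
    have h1γ : (0:ℝ) < 1 - γ := by linarith
    obtain ⟨hBne, hΔeq⟩ := hrat γ hγ0.le h2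
    rw [hB_fac] at hBne
    simp only [eval_mul, eval_pow, eval_sub, eval_one, eval_X] at hBne
    have hB₁γ : B₁.eval γ ≠ 0 := fun h => hBne (by rw [h, mul_zero])
    have hΔ2 : Δ γ = (1-γ)^c₁ * A₁.eval γ / ((1-γ)^c₂ * B₁.eval γ) := by
      rw [hΔ]
      simp only
      rw [hΔeq, hA_fac, hB_fac]
      simp only [eval_mul, eval_pow, eval_sub, eval_one, eval_X]
    have e1 : r γ ^ (1 - (J:ℤ)) = (1-γ)^(1-(J:ℤ)) * γ^((J:ℤ)-1) := by
      rw [hrdef]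
      simp only
      rw [div_zpow, div_eq_mul_inv, ← _root_.zpow_neg]
      congr 1
      ring
    have e3 : (1-γ)^(1-(J:ℤ)) * ((1-γ)^((c₁:ℤ)) * ((1-γ)^((c₂:ℤ)))⁻¹) = (1-γ)^d := by
      rw [← _root_.zpow_neg, ← zpow_add₀ h1γ.ne', ← zpow_add₀ h1γ.ne', hd]
      congr 1
      ring
    rw [hΔ2, e1, ← e3, ← zpow_natCast (1-γ) c₁, ← zpow_natCast (1-γ) c₂]
    field_simp
  have limB : Tendsto (fun γ : ℝ => γ ^ ((J:ℤ)-1) * (A₁.eval γ / B₁.eval γ)) (𝓝[<] (1:ℝ))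
      (𝓝 (A₁.eval 1 / B₁.eval 1)) := by
    have hc1 : ContinuousAt (fun γ : ℝ => γ ^ ((J:ℤ)-1)) 1 :=
      continuousAt_zpow₀ 1 _ (Or.inl one_ne_zero)
    have hc2 : ContinuousAt (fun γ : ℝ => A₁.eval γ / B₁.eval γ) 1 :=
      (A₁.continuousAt).div (B₁.continuousAt) hB₁
    have := (hc1.mul hc2).tendsto.mono_left (nhdsWithin_le_nhds (s := Set.Iio (1:ℝ)))
    simpa [Pi.mul_def] using this
  have hL0 : A₁.eval 1 / B₁.eval 1 ≠ 0 := div_ne_zero hA₁ hB₁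
  have limA' : Tendsto (fun γ : ℝ => (1-γ)^d * (γ^((J:ℤ)-1) * (A₁.eval γ / B₁.eval γ)))
      (𝓝[<] (1:ℝ)) (𝓝 (ψ J s)) := Tendsto.congr' heq limA
  have hNe : ∀ᶠ γ in 𝓝[<] (1:ℝ), γ^((J:ℤ)-1) * (A₁.eval γ / B₁.eval γ) ≠ 0 :=
    limB.eventually_ne hL0
  have limC : Tendsto (fun γ : ℝ => (1-γ)^d) (𝓝[<] (1:ℝ))
      (𝓝 (ψ J s / (A₁.eval 1 / B₁.eval 1))) := by
    have hdiv := limA'.div limB hL0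
    refine Tendsto.congr' ?_ hdiv
    filter_upwards [hNe] with γ h
    simp only [Pi.div_apply]
    rw [mul_div_assoc, div_self h, mul_one]
  have h1γt : Tendsto (fun γ : ℝ => 1 - γ) (𝓝[<] (1:ℝ)) (𝓝[>] 0) := by
    rw [tendsto_nhdsWithin_iff]
    constructor
    · have : Tendsto (fun γ : ℝ => 1 - γ) (𝓝 1) (𝓝 (1 - 1)) :=
        (continuous_const.sub continuous_id).tendsto 1
      simpa using this.mono_left nhdsWithin_le_nhds
    · filter_upwards [eventually_mem_nhdsWithin] with γ hγ
      simpa using sub_pos.mpr (Set.mem_Iio.mp hγ)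
  have hd0 : d = 0 := by
    by_contra hdne
    rcases lt_or_gt_of_ne hdne with hneg | hpos
    · -- d < 0 : (1-γ)^d → atTop, contradiction
      have hm : (((-d).toNat : ℤ)) = -d := Int.toNat_of_nonneg (by omega)
      have hmne : (-d).toNat ≠ 0 := by omega
      have h2 : Tendsto (fun γ : ℝ => (1-γ)^((-d).toNat)) (𝓝[<] (1:ℝ)) (𝓝[>] 0) := by
        rw [tendsto_nhdsWithin_iff]
        constructor
        · have := (h1γt.mono_right nhdsWithin_le_nhds).pow ((-d).toNat)
          simpa [zero_pow hmne] using this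
        · filter_upwards [eventually_mem_nhdsWithin] with γ hγ
          simpa using pow_pos (sub_pos.mpr (Set.mem_Iio.mp hγ)) ((-d).toNat)
      have h3 := h2.inv_tendsto_nhdsGT_zero
      have hfe : (fun γ : ℝ => (1-γ)^((-d).toNat))⁻¹ = fun γ : ℝ => (1-γ)^d := by
        funext γ
        simp only [Pi.inv_apply]
        rw [← zpow_natCast, hm, _root_.zpow_neg, inv_inv]
      rw [hfe] at h3
      exact not_tendsto_nhds_of_tendsto_atTop h3 _ limC
    · -- d > 0 : (1-γ)^d → 0, contradiction with ψ J s ≠ 0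
      have hm : ((d.toNat : ℤ)) = d := Int.toNat_of_nonneg (by omega)
      have hmne : d.toNat ≠ 0 := by omega
      have h2 : Tendsto (fun γ : ℝ => (1-γ:ℝ)^(d.toNat)) (𝓝[<] (1:ℝ)) (𝓝 0) := by
        have := (h1γt.mono_right nhdsWithin_le_nhds).pow (d.toNat)
        simpa [zero_pow hmne] using this
      have hfe : (fun γ : ℝ => (1-γ:ℝ)^(d.toNat)) = fun γ : ℝ => (1-γ)^d := by
        funext γ
        rw [← zpow_natCast, hm]
      rw [hfe] at h2
      have h0 := tendsto_nhds_unique limC h2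
      rw [_root_.div_eq_zero_iff] at h0
      rcases h0 with h0 | h0
      · exact hJne h0
      · exact hL0 h0
  have hone : ψ J s / (A₁.eval 1 / B₁.eval 1) = 1 := by
    refine tendsto_nhds_unique limC ?_
    simp only [hd0, zpow_zero]
    exact tendsto_const_nhds
  have hLψ : A₁.eval 1 / B₁.eval 1 = ψ J s := by
    rw [div_eq_one_iff_eq hL0] at hone
    exact hone.symm
  refine ⟨hLψ, ?_⟩
  rw [← hLψ, mul_pos_iff, div_pos_iff]


end

end
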